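/- Let p and p' be positive integers. Then, as an identity of meromorphic functions in (u,v,τ) ∈ ℂ×ℂ×ℍ (valid at every point where all terms are defined), A_{2p'}(u/p, v/p; τ/p) = (1/(2p')) Σ_{n=0}^{p−1} Σ_{m=0}^{p−1} e^{2πiu(2m+2p'−p)/(2p)} e^{2πivn/p} e^{2πiτ( n(p'n+m+p')/p − n/2 )} · Σ_{ℓ=0}^{2p'−1} A_1( u+nτ, ((2p'n+m+p')/(2p'))τ − (p/(4p'))τ + (v+ℓ)/(2p'); (p/(2p'))τ ). -/

import Mathlib

open Complex
open scoped Real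

noncomputable section

/-- `e2 x = exp(2πi x)`. -/
def e2 (x : ℂ) : ℂ := Complex.exp (2 * (π : ℂ) * Complex.I * x)

/-- Level K Appell–Lerch sum. -/
def AL (K : ℤ) (u v τ : ℂ) : ℂ :=
  e2 (u * K / 2) * ∑' n : ℤ,
    (-1 : ℂ) ^ (K * n) * e2 (v * n) * e2 (τ * (K * (n : ℂ) * ((n : ℂ) + 1) / 2)) /
      (1 - e2 u * e2 (τ * n))

/-- The predicate that the Appell–Lerch sum with first argument u and modular
variable τ has no vanishing denominators. -/
def ALDefined (u τ : ℂ) : Prop := ∀ n : ℤ, e2 u * e2 (τ * n) ≠ 1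

open Filter

def Tc (p p' : ℕ) (τ : ℂ) : ℂ := ((p:ℂ)/(2*(p':ℂ)))*τ

def V0c (p p' n m : ℕ) (v τ : ℂ) : ℂ :=
  ((2*(p':ℂ)*(n:ℂ) + (m:ℂ) + (p':ℂ))/(2*(p':ℂ)))*τ - ((p:ℂ)/(4*(p':ℂ)))*τ + v/(2*(p':ℂ))

def tt (p p' n m : ℕ) (u v τ : ℂ) (k : ℤ) : ℂ :=
  (-1:ℂ)^k * e2 (V0c p p' n m v τ * (k:ℂ)) * e2 (Tc p p' τ * ((k:ℂ)*((k:ℂ)+1)/2)) /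
    (1 - e2 (u + (n:ℂ)*τ) * e2 (Tc p p' τ * (k:ℂ)))

def Gterm (p p' : ℕ) (u v τ : ℂ) (N : ℤ) : ℂ :=
  e2 ((v/(p:ℂ))*(N:ℂ)) * e2 ((τ/(p:ℂ))*(2*(p':ℂ)*(N:ℂ)*((N:ℂ)+1)/2)) /
    (1 - e2 (u/(p:ℂ)) * e2 ((τ/(p:ℂ))*(N:ℂ)))

lemma e2_add (a b : ℂ) : e2 (a + b) = e2 a * e2 b := by
  simp [e2, mul_add, Complex.exp_add]
lemma e2_ne_zero (a : ℂ) : e2 a ≠ 0 := Complex.exp_ne_zero _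
lemma e2_zpow (a : ℂ) (n : ℤ) : e2 a ^ n = e2 (n * a) := by
  rw [e2, e2, ← Complex.exp_int_mul]; ring_nf
lemma e2_pow (a : ℂ) (n : ℕ) : e2 a ^ n = e2 (n * a) := by
  have := e2_zpow a n; simpa using this
lemma e2_int (n : ℤ) : e2 n = 1 := by
  rw [e2, Complex.exp_eq_one_iff]; exact ⟨n, by ring⟩
lemma two_pi_I_ne : (2 * (π:ℂ) * I) ≠ 0 :=
  mul_ne_zero (mul_ne_zero two_ne_zero (Complex.ofReal_ne_zero.2 Real.pi_ne_zero)) I_ne_zero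
lemma e2_eq_one_iff (z : ℂ) : e2 z = 1 ↔ ∃ n : ℤ, z = n := by
  rw [e2, Complex.exp_eq_one_iff]
  constructor
  · rintro ⟨n, hn⟩
    refine ⟨n, ?_⟩
    have h : (2 * (π:ℂ) * I) * z = (2 * (π:ℂ) * I) * n := by rw [hn]; ring
    exact mul_left_cancel₀ two_pi_I_ne h
  · rintro ⟨n, rfl⟩
    exact ⟨n, by ring⟩

lemma sum_e2_div (M : ℕ) (hM : 0 < M) (k : ℤ) :
    ∑ l ∈ Finset.range M, e2 ((k:ℂ) * l / M) = if (M:ℤ) ∣ k then (M:ℂ) else 0 := by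
  have hMc : (M:ℂ) ≠ 0 := Nat.cast_ne_zero.2 hM.ne'
  have hterm : ∀ l : ℕ, e2 ((k:ℂ) * l / M) = e2 ((k:ℂ)/M) ^ l := by
    intro l
    rw [e2_pow]
    congr 1
    ring
  rw [Finset.sum_congr rfl (fun l _ => hterm l)]
  by_cases hdvd : (M:ℤ) ∣ k
  · rw [if_pos hdvd]
    obtain ⟨j, hj⟩ := hdvd
    have h1 : e2 ((k:ℂ)/M) = 1 := by
      have he : ((k:ℂ)/M) = ((j:ℤ):ℂ) := by
        rw [show (k:ℂ) = ((M:ℂ)*(j:ℂ)) by exact_mod_cast congrArg (Int.cast : ℤ → ℂ) hj]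
        field_simp
      rw [he, e2_int]
    simp [h1]
  · rw [if_neg hdvd]
    have hx1 : e2 ((k:ℂ)/M) ≠ 1 := by
      intro h
      obtain ⟨j, hj⟩ := (e2_eq_one_iff _).1 h
      apply hdvd
      refine ⟨j, ?_⟩
      have hkc : (k:ℂ) = ((M:ℂ)*(j:ℂ)) := by
        field_simp at hj
        linear_combination hj
      exact_mod_cast hkc
    rw [geom_sum_eq hx1]
    have hxM : e2 ((k:ℂ)/M) ^ M = 1 := by
      rw [e2_pow]
      have h2 : (M:ℂ) * ((k:ℂ)/M) = ((k:ℤ):ℂ) := by field_simp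
      rw [h2, e2_int]
    rw [hxM]
    simp

lemma tsum_dvd_eq (M : ℕ) (hM : 0 < M) (h : ℤ → ℂ) :
    ∑' k : ℤ, (if (M:ℤ) ∣ k then h k else 0) = ∑' s : ℤ, h ((M:ℤ) * s) := by
  have hinj : Function.Injective (fun s : ℤ => (M:ℤ) * s) := fun a b hab => by
    have hM' : (M:ℤ) ≠ 0 := by exact_mod_cast hM.ne'
    exact mul_left_cancel₀ hM' hab
  have hsupp : Function.support (fun k : ℤ => if (M:ℤ) ∣ k then h k else 0) ⊆
      Set.range (fun s : ℤ => (M:ℤ) * s) := by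
    intro k hk
    simp only [Function.mem_support] at hk
    by_cases hd : (M:ℤ) ∣ k
    · obtain ⟨s, rfl⟩ := hd
      exact ⟨s, rfl⟩
    · simp [hd] at hk
  rw [← Function.Injective.tsum_eq hinj hsupp]
  apply tsum_congr
  intro s
  simp [Dvd.intro s rfl]

def intEquiv (p : ℕ) (hp : 0 < p) : (Fin p) × ℤ ≃ ℤ where
  toFun := fun x => (x.1 : ℤ) + p * x.2
  invFun := fun N => (⟨(N % p).toNat, by
    have h1 : 0 ≤ N % (p:ℤ) := Int.emod_nonneg N (by exact_mod_cast hp.ne')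
    have h2 : N % (p:ℤ) < p := Int.emod_lt_of_pos N (by exact_mod_cast hp)
    omega⟩, N / p)
  left_inv := by
    rintro ⟨⟨n, hn⟩, s⟩
    have h1 : ((n:ℤ) + p * s) % (p:ℤ) = (n:ℤ) := by
      rw [Int.add_mul_emod_self_left]
      exact Int.emod_eq_of_lt (by positivity) (by exact_mod_cast hn)
    have h2 : ((n:ℤ) + p * s) / (p:ℤ) = s := by
      rw [Int.add_mul_ediv_left _ _ (by exact_mod_cast hp.ne' : (p:ℤ) ≠ 0)]
      rw [Int.ediv_eq_zero_of_lt (by positivity) (by exact_mod_cast hn)]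
      ring
    simp only [h1, h2]
    ext <;> simp
  right_inv := by
    intro N
    simp only []
    have h1 : 0 ≤ N % (p:ℤ) := Int.emod_nonneg N (by exact_mod_cast hp.ne')
    rw [Int.toNat_of_nonneg h1]
    rw [Int.emod_add_mul_ediv N p]

lemma tsum_fiber (p : ℕ) (hp : 0 < p) (F : ℤ → ℂ) (hF : Summable F) :
    ∑' N : ℤ, F N = ∑ n ∈ Finset.range p, ∑' s : ℤ, F ((n:ℤ) + p * s) := by
  rw [← (intEquiv p hp).tsum_eq F]
  have hFe : Summable (F ∘ (intEquiv p hp)) := ((intEquiv p hp).summable_iff).2 hF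
  rw [show (fun c => F ((intEquiv p hp) c)) = (F ∘ (intEquiv p hp)) from rfl]
  rw [Summable.tsum_prod' hFe (fun n => by
    have : (fun s : ℤ => (F ∘ (intEquiv p hp)) (n, s)) = fun s : ℤ => F ((n:ℤ) + p * s) := rfl
    rw [this]
    exact hF.comp_injective (fun a b hab => by
      have hp' : (p:ℤ) ≠ 0 := by exact_mod_cast hp.ne'
      exact mul_left_cancel₀ hp' (add_left_cancel hab)))]
  rw [tsum_fintype]
  exact Fin.sum_univ_eq_sum_range (fun n => ∑' s : ℤ, F ((n:ℤ) + p * s)) p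

lemma norm_e2 (z : ℂ) : ‖e2 z‖ = Real.exp (-(2*π*z.im)) := by
  rw [e2, Complex.norm_exp]
  congr 1
  simp [Complex.mul_re, Complex.mul_im]

lemma norm_ALterm (K n : ℤ) (u v τ : ℂ) :
    ‖(-1:ℂ)^(K*n) * e2 (v*n) * e2 (τ*((K:ℂ)*(n:ℂ)*((n:ℂ)+1)/2)) / (1 - e2 u * e2 (τ*n))‖
    = Real.exp (-(2*π)*(v.im * n + τ.im * ((K*n*(n+1):ℤ):ℝ)/2)) / ‖1 - e2 u * e2 (τ*(n:ℂ))‖ := by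
  rw [norm_div, norm_mul, norm_mul, norm_zpow]
  rw [norm_neg, norm_one, one_zpow, one_mul, norm_e2, norm_e2, ← Real.exp_add]
  congr 2
  have h1 : (v * (n:ℂ)).im = v.im * (n:ℝ) := by
    simp [Complex.mul_im]
  have h2 : (τ*((K:ℂ)*(n:ℂ)*((n:ℂ)+1)/2)).im = τ.im * (((K*n*(n+1):ℤ):ℝ)/2) := by
    have : ((K:ℂ)*(n:ℂ)*((n:ℂ)+1)/2) = ((((K*n*(n+1):ℤ):ℝ)/2 : ℝ) : ℂ) := by
      push_cast; ring
    rw [this]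
    simp [Complex.mul_im]
  rw [h1, h2]
  ring

lemma norm_denom_aux (u τ : ℂ) (n : ℤ) :
    ‖e2 u * e2 (τ*(n:ℂ))‖ = Real.exp (-(2*π)*(u.im + τ.im * n)) := by
  rw [norm_mul, norm_e2, norm_e2, ← Real.exp_add]
  congr 1
  have : (τ * (n:ℂ)).im = τ.im * (n:ℝ) := by simp [Complex.mul_im]
  rw [this]
  ring



lemma summable_ALterm (K : ℤ) (hK : 1 ≤ K) (u v τ : ℂ) (hτ : 0 < τ.im) :
    Summable (fun n : ℤ => (-1:ℂ)^(K*n) * e2 (v*n) * e2 (τ*((K:ℂ)*(n:ℂ)*((n:ℂ)+1)/2)) /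
      (1 - e2 u * e2 (τ*n))) := by
  have hπ : (0:ℝ) < π := Real.pi_pos
  have ht : (0:ℝ) < τ.im := hτ
  have h2e : (2:ℝ) ≤ Real.exp 1 := by nlinarith [Real.add_one_le_exp 1]
  have he : Real.exp (-1) ≤ 1/2 := by
    rw [Real.exp_neg]
    calc (Real.exp 1)⁻¹ ≤ 2⁻¹ := inv_anti₀ (by norm_num) h2e
    _ = 1/2 := by norm_num
  have hgeo : Summable (fun k : ℕ => Real.exp (-1) ^ k) :=
    summable_geometric_of_lt_one (Real.exp_pos _).le (lt_of_le_of_lt he (by norm_num))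
  have hKr : (1:ℝ) ≤ (K:ℝ) := by exact_mod_cast hK
  obtain ⟨k0, hk0⟩ := exists_nat_ge ((4 + 2*π*|v.im| + 2*π*|u.im| + 2*π*τ.im) / (π * τ.im))
  have hk0' : 4 + 2*π*|v.im| + 2*π*|u.im| + 2*π*τ.im ≤ π * τ.im * k0 := by
    have := (div_le_iff₀ (by positivity : (0:ℝ) < π * τ.im)).mp hk0
    nlinarith
  apply Summable.of_nat_of_neg
  · -- positive direction
    apply Summable.of_norm_bounded_eventually_nat (hgeo.mul_left 2)
    filter_upwards [eventually_ge_atTop (max k0 1)] with k hk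
    have hk1 : (1:ℝ) ≤ (k:ℝ) := by exact_mod_cast le_trans (le_max_right k0 1) hk
    have hkk0 : (k0:ℝ) ≤ (k:ℝ) := by exact_mod_cast le_trans (le_max_left k0 1) hk
    have hknn : (0:ℝ) ≤ (k:ℝ) := by linarith
    have htk : π * τ.im * k0 ≤ π * τ.im * k :=
      mul_le_mul_of_nonneg_left hkk0 (by positivity)
    rw [norm_ALterm K (k:ℤ) u v τ]
    push_cast
    have hnd := norm_denom_aux u τ (k:ℤ)
    push_cast at hnd
    have hden : 1/2 ≤ ‖1 - e2 u * e2 (τ * (k:ℂ))‖ := by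
      have hsmall : Real.exp (-(2*π)*(u.im + τ.im * (k:ℝ))) ≤ 1/2 := by
        have harg : -(2*π)*(u.im + τ.im*(k:ℝ)) ≤ -1 := by
          linarith [htk, hk0', mul_le_mul_of_nonneg_right (neg_abs_le u.im) hπ.le,
            mul_nonneg hπ.le (abs_nonneg u.im), mul_nonneg hπ.le (abs_nonneg v.im),
            mul_nonneg hπ.le ht.le]
        exact le_trans (Real.exp_le_exp.2 harg) he
      calc (1:ℝ)/2 = 1 - 1/2 := by norm_num
      _ ≤ ‖(1:ℂ)‖ - ‖e2 u * e2 (τ * (k:ℂ))‖ := by rw [norm_one, hnd]; linarith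
      _ ≤ ‖1 - e2 u * e2 (τ * (k:ℂ))‖ := norm_sub_norm_le _ _
    have hquad : 1*((k:ℝ)*((k:ℝ)+1)) ≤ (K:ℝ)*((k:ℝ)*((k:ℝ)+1)) :=
      mul_le_mul_of_nonneg_right hKr (by positivity)
    have e2' : (4 + 2*π*|v.im|) * (k:ℝ) ≤ π * τ.im * (k:ℝ) * (k:ℝ) := by
      linarith [mul_le_mul_of_nonneg_right htk hknn,
        mul_le_mul_of_nonneg_right hk0' hknn,
        mul_nonneg (mul_nonneg hπ.le (abs_nonneg u.im)) hknn,
        mul_nonneg (mul_nonneg hπ.le ht.le) hknn]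
    have hnum : Real.exp (-(2*π)*(v.im * (k:ℝ) + τ.im * ((K:ℝ)*(k:ℝ)*((k:ℝ)+1))/2))
        ≤ Real.exp (-1)^k := by
      rw [show Real.exp (-1)^k = Real.exp ((k:ℝ) * (-1)) from (Real.exp_nat_mul _ k).symm]
      apply Real.exp_le_exp.2
      linarith [mul_le_mul_of_nonneg_left hquad (by positivity : (0:ℝ) ≤ π * τ.im),
        mul_nonneg (mul_nonneg hπ.le ht.le) hknn, e2',
        mul_le_mul_of_nonneg_right (neg_abs_le v.im) (mul_nonneg hπ.le hknn)]
    calc Real.exp (-(2*π)*(v.im * (k:ℝ) + τ.im * ((K:ℝ)*(k:ℝ)*((k:ℝ)+1))/2)) /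
          ‖1 - e2 u * e2 (τ * (k:ℂ))‖
        ≤ Real.exp (-1)^k / (1/2) :=
          div_le_div₀ (by positivity) hnum (by norm_num) hden
      _ = 2 * Real.exp (-1)^k := by ring
  · -- negative direction
    apply Summable.of_norm_bounded_eventually_nat (hgeo.mul_left 2)
    filter_upwards [eventually_ge_atTop (max k0 1)] with k hk
    have hk1 : (1:ℝ) ≤ (k:ℝ) := by exact_mod_cast le_trans (le_max_right k0 1) hk
    have hkk0 : (k0:ℝ) ≤ (k:ℝ) := by exact_mod_cast le_trans (le_max_left k0 1) hk
    have hknn : (0:ℝ) ≤ (k:ℝ) := by linarith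
    have htk : π * τ.im * k0 ≤ π * τ.im * k :=
      mul_le_mul_of_nonneg_left hkk0 (by positivity)
    rw [norm_ALterm K (-(k:ℤ)) u v τ]
    push_cast
    have hnd := norm_denom_aux u τ (-(k:ℤ))
    push_cast at hnd
    set Y := 2*π*(τ.im*(k:ℝ) - u.im) with hY
    have hYexp : Real.exp (-(2*π)*(u.im + τ.im * (-(k:ℝ)))) = Real.exp Y := by
      congr 1; rw [hY]; ring
    have hbig : 2 ≤ Real.exp Y := by
      have harg : (1:ℝ) ≤ Y := by
        rw [hY]
        linarith [htk, hk0', mul_le_mul_of_nonneg_right (le_abs_self u.im) hπ.le,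
          mul_nonneg hπ.le (abs_nonneg u.im), mul_nonneg hπ.le (abs_nonneg v.im),
          mul_nonneg hπ.le ht.le]
      exact le_trans h2e (Real.exp_le_exp.2 harg)
    have hden : Real.exp Y / 2 ≤ ‖1 - e2 u * e2 (τ * (-(k:ℝ):ℂ))‖ := by
      calc Real.exp Y / 2 = Real.exp Y - Real.exp Y / 2 := by ring
        _ ≤ Real.exp Y - 1 := by linarith
        _ = ‖e2 u * e2 (τ * (-(k:ℝ):ℂ))‖ - ‖(1:ℂ)‖ := by
            rw [norm_one, ← hYexp, ← hnd]; push_cast; ring_nf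
        _ ≤ ‖e2 u * e2 (τ * (-(k:ℝ):ℂ)) - 1‖ := norm_sub_norm_le _ _
        _ = ‖1 - e2 u * e2 (τ * (-(k:ℝ):ℂ))‖ := by rw [norm_sub_rev]
    have hdpos : (0:ℝ) < Real.exp Y / 2 := by positivity
    have hquad : 1*((k:ℝ)*((k:ℝ)-1)) ≤ (K:ℝ)*((k:ℝ)*((k:ℝ)-1)) :=
      mul_le_mul_of_nonneg_right hKr (by nlinarith)
    have e2' : (4 + 2*π*|v.im| + 2*π*|u.im| + 2*π*τ.im) * (k:ℝ) ≤ π * τ.im * (k:ℝ) * (k:ℝ) := by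
      linarith [mul_le_mul_of_nonneg_right htk hknn,
        mul_le_mul_of_nonneg_right hk0' hknn]
    have hnum : Real.exp (-(2*π)*(v.im * (-(k:ℝ)) + τ.im * ((K:ℝ)*(-(k:ℝ))*((-(k:ℝ))+1))/2))
        ≤ Real.exp (-1)^k * (Real.exp Y / 2) := by
      rw [show Real.exp (-1)^k = Real.exp ((k:ℝ) * (-1)) from (Real.exp_nat_mul _ k).symm]
      have step2 : Real.exp ((k:ℝ)*(-1) + Y - 1) ≤ Real.exp ((k:ℝ)*(-1)) * (Real.exp Y / 2) := by
        rw [show (k:ℝ)*(-1) + Y - 1 = ((k:ℝ)*(-1) + Y) + (-1) by ring, Real.exp_add,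
          Real.exp_add]
        nlinarith [Real.exp_pos ((k:ℝ)*(-1)), Real.exp_pos Y, he,
          mul_pos (Real.exp_pos ((k:ℝ)*(-1))) (Real.exp_pos Y)]
      refine le_trans (Real.exp_le_exp.2 ?_) step2
      rw [hY]
      linarith [mul_le_mul_of_nonneg_left hquad (by positivity : (0:ℝ) ≤ π * τ.im), e2',
        mul_nonneg (mul_nonneg hπ.le ht.le) hknn,
        mul_le_mul_of_nonneg_right (le_abs_self v.im) (mul_nonneg hπ.le hknn),
        mul_le_mul_of_nonneg_right (le_abs_self u.im) hπ.le,
        mul_nonneg (mul_nonneg hπ.le (abs_nonneg u.im)) (show (0:ℝ) ≤ (k:ℝ)-1 by linarith)]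
    calc Real.exp (-(2*π)*(v.im * (-(k:ℝ)) + τ.im * ((K:ℝ)*(-(k:ℝ))*((-(k:ℝ))+1))/2)) /
          ‖1 - e2 u * e2 (τ * (-(k:ℝ):ℂ))‖
        ≤ Real.exp (-(2*π)*(v.im * (-(k:ℝ)) + τ.im * ((K:ℝ)*(-(k:ℝ))*((-(k:ℝ))+1))/2)) /
            (Real.exp Y / 2) :=
          div_le_div_of_nonneg_left (by positivity) hdpos hden
      _ ≤ Real.exp (-1)^k := (div_le_iff₀ hdpos).2 hnum
      _ ≤ 2 * Real.exp (-1)^k := by nlinarith [pow_pos (Real.exp_pos (-1)) k]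

lemma Tc_im (p p' : ℕ) (hp : 0 < p) (hp' : 0 < p') (τ : ℂ) (hτ : 0 < τ.im) :
    0 < (Tc p p' τ).im := by
  have h1 : Tc p p' τ = (((p:ℝ)/(2*(p':ℝ)) : ℝ):ℂ) * τ := by
    unfold Tc; push_cast; ring
  rw [h1]
  have h2 : ((((p:ℝ)/(2*(p':ℝ)) : ℝ):ℂ) * τ).im = ((p:ℝ)/(2*(p':ℝ))) * τ.im :=
    Complex.im_ofReal_mul _ _
  rw [h2]
  have hpr : (0:ℝ) < (p:ℝ) := by exact_mod_cast hp
  have hpr' : (0:ℝ) < (p':ℝ) := by exact_mod_cast hp'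
  exact mul_pos (by positivity) hτ

lemma summable_tt_shape (p p' n m : ℕ) (hp : 0 < p) (hp' : 0 < p') (u v τ : ℂ)
    (hτ : 0 < τ.im) (V : ℂ) :
    Summable (fun k : ℤ => (-1:ℂ)^k * e2 (V*(k:ℂ)) *
      e2 (Tc p p' τ * ((k:ℂ)*((k:ℂ)+1)/2)) /
      (1 - e2 (u + (n:ℂ)*τ) * e2 (Tc p p' τ * (k:ℂ)))) := by
  have := summable_ALterm 1 le_rfl (u + (n:ℂ)*τ) V (Tc p p' τ) (Tc_im p p' hp hp' τ hτ)
  simpa using this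

lemma step1 (p p' n m : ℕ) (hp : 0 < p) (hp' : 0 < p') (u v τ : ℂ) (hτ : 0 < τ.im) :
    ∑ l ∈ Finset.range (2*p'),
      AL 1 (u + (n:ℂ)*τ)
        (((2*(p':ℂ)*(n:ℂ) + (m:ℂ) + (p':ℂ))/(2*(p':ℂ)))*τ - ((p:ℂ)/(4*(p':ℂ)))*τ
          + (v+(l:ℂ))/(2*(p':ℂ)))
        (((p:ℂ)/(2*(p':ℂ)))*τ)
    = e2 ((u + (n:ℂ)*τ)/2) * (2*(p':ℂ) * ∑' s : ℤ, tt p p' n m u v τ (2*(p':ℤ)*s)) := by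
  have hTc : ((p:ℂ)/(2*(p':ℂ)))*τ = Tc p p' τ := rfl
  rw [hTc]
  have hP' : (p':ℂ) ≠ 0 := Nat.cast_ne_zero.2 hp'.ne'
  have hM : 0 < 2*p' := by omega
  -- clean form of AL 1
  have hAL1 : ∀ V : ℂ, AL 1 (u + (n:ℂ)*τ) V (Tc p p' τ) = e2 ((u + (n:ℂ)*τ)/2) *
      ∑' k : ℤ, (-1:ℂ)^k * e2 (V*(k:ℂ)) * e2 (Tc p p' τ * ((k:ℂ)*((k:ℂ)+1)/2)) /
        (1 - e2 (u + (n:ℂ)*τ) * e2 (Tc p p' τ * (k:ℂ))) := by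
    intro V
    rw [AL]
    norm_num
  -- per-l identity
  have h1 : ∀ l ∈ Finset.range (2*p'),
      AL 1 (u + (n:ℂ)*τ)
        (((2*(p':ℂ)*(n:ℂ) + (m:ℂ) + (p':ℂ))/(2*(p':ℂ)))*τ - ((p:ℂ)/(4*(p':ℂ)))*τ
          + (v+(l:ℂ))/(2*(p':ℂ))) (Tc p p' τ)
      = e2 ((u + (n:ℂ)*τ)/2) *
          ∑' k : ℤ, tt p p' n m u v τ k * e2 ((k:ℂ)*(l:ℂ)/(2*(p':ℂ))) := by
    intro l _
    have hVeq : (((2*(p':ℂ)*(n:ℂ) + (m:ℂ) + (p':ℂ))/(2*(p':ℂ)))*τ - ((p:ℂ)/(4*(p':ℂ)))*τ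
        + (v+(l:ℂ))/(2*(p':ℂ))) = V0c p p' n m v τ + (l:ℂ)/(2*(p':ℂ)) := by
      unfold V0c; ring
    rw [hVeq, hAL1]
    congr 1
    apply tsum_congr
    intro k
    unfold tt
    rw [show (V0c p p' n m v τ + (l:ℂ)/(2*(p':ℂ)))*(k:ℂ)
        = V0c p p' n m v τ * (k:ℂ) + (k:ℂ)*(l:ℂ)/(2*(p':ℂ)) by ring, e2_add]
    ring
  rw [Finset.sum_congr rfl h1, ← Finset.mul_sum]
  congr 1
  -- swap finite sum and tsum
  have hsumm : ∀ l ∈ Finset.range (2*p'),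
      Summable (fun k : ℤ => tt p p' n m u v τ k * e2 ((k:ℂ)*(l:ℂ)/(2*(p':ℂ)))) := by
    intro l _
    apply (summable_tt_shape p p' n m hp hp' u v τ hτ
      (V0c p p' n m v τ + (l:ℂ)/(2*(p':ℂ)))).congr
    intro k
    unfold tt
    rw [show (V0c p p' n m v τ + (l:ℂ)/(2*(p':ℂ)))*(k:ℂ)
        = V0c p p' n m v τ * (k:ℂ) + (k:ℂ)*(l:ℂ)/(2*(p':ℂ)) by ring, e2_add]
    ring
  rw [← Summable.tsum_finsetSum hsumm]
  -- collapse the root-of-unity sum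
  have hroot : ∀ k : ℤ, ∑ l ∈ Finset.range (2*p'), e2 ((k:ℂ)*(l:ℂ)/(2*(p':ℂ)))
      = if 2*(p':ℤ) ∣ k then 2*(p':ℂ) else 0 := by
    intro k
    have := sum_e2_div (2*p') hM k
    push_cast at this
    exact this
  have hstep : ∑' k : ℤ, ∑ l ∈ Finset.range (2*p'),
      tt p p' n m u v τ k * e2 ((k:ℂ)*(l:ℂ)/(2*(p':ℂ)))
      = ∑' k : ℤ, (if 2*(p':ℤ) ∣ k then tt p p' n m u v τ k * (2*(p':ℂ)) else 0) := by
    apply tsum_congr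
    intro k
    rw [← Finset.mul_sum, hroot k, mul_ite, mul_zero]
  rw [hstep]
  have hdvd := tsum_dvd_eq (2*p') hM (fun k => tt p p' n m u v τ k * (2*(p':ℂ)))
  push_cast at hdvd
  rw [hdvd]
  rw [tsum_mul_right]
  ring


lemma heart (p p' : ℕ) (hp : 0 < p) (hp' : 0 < p') (u v τ : ℂ) (n : ℕ) (s : ℤ)
    (hX : e2 (u/(p:ℂ)) * e2 ((τ/(p:ℂ)) * (((n:ℤ) + (p:ℤ)*s : ℤ):ℂ)) ≠ 1)
    (hXp : e2 (u + (n:ℂ)*τ) * e2 ((Tc p p' τ) * ((2*(p':ℤ)*s : ℤ):ℂ)) ≠ 1) :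
    ∑ m ∈ Finset.range p,
      e2 (u * ((2*(m:ℂ) + 2*(p':ℂ) - (p:ℂ))/(2*(p:ℂ)))) * e2 (v*(n:ℂ)/(p:ℂ)) *
        e2 (τ * ((n:ℂ)*((p':ℂ)*(n:ℂ) + (m:ℂ) + (p':ℂ))/(p:ℂ) - (n:ℂ)/2)) *
        e2 ((u + (n:ℂ)*τ)/2) * tt p p' n m u v τ (2*(p':ℤ)*s)
    = e2 (u*(p':ℂ)/(p:ℂ)) * Gterm p p' u v τ ((n:ℤ) + (p:ℤ)*s) := by
  have hPc : (p:ℂ) ≠ 0 := Nat.cast_ne_zero.2 hp.ne'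
  have hP'c : (p':ℂ) ≠ 0 := Nat.cast_ne_zero.2 hp'.ne'
  have hP : (p:ℂ) * (p:ℂ)⁻¹ = 1 := mul_inv_cancel₀ hPc
  have hP' : (p':ℂ) * (p':ℂ)⁻¹ = 1 := mul_inv_cancel₀ hP'c
  have hNcast : (((n:ℤ) + (p:ℤ)*s : ℤ):ℂ) = (n:ℂ) + (p:ℂ)*(s:ℂ) := by push_cast; ring
  have hkcast : ((2*(p':ℤ)*s : ℤ):ℂ) = 2*(p':ℂ)*(s:ℂ) := by push_cast; ring
  have hsign : (-1:ℂ)^(2*(p':ℤ)*s) = 1 := by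
    rw [show (2*(p':ℤ)*s) = 2*((p':ℤ)*s) by ring, zpow_mul]
    norm_num
  have hQeq : e2 (u/(p:ℂ)) * e2 ((τ/(p:ℂ)) * (((n:ℤ) + (p:ℤ)*s : ℤ):ℂ))
      = e2 ((u + ((n:ℂ) + (p:ℂ)*(s:ℂ))*τ)/(p:ℂ)) := by
    rw [← e2_add]
    congr 1
    rw [hNcast]
    field_simp
  have hQ1 : e2 ((u + ((n:ℂ) + (p:ℂ)*(s:ℂ))*τ)/(p:ℂ)) ≠ 1 := by rw [← hQeq]; exact hX
  have hAeq : e2 (u + (n:ℂ)*τ) * e2 ((Tc p p' τ) * ((2*(p':ℤ)*s : ℤ):ℂ))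
      = e2 (u + ((n:ℂ) + (p:ℂ)*(s:ℂ))*τ) := by
    rw [← e2_add]
    congr 1
    rw [hkcast]
    unfold Tc
    have h2P' : 2*(p':ℂ) ≠ 0 := by simp [hP'c]
    field_simp
    ring
  have hA1 : e2 (u + ((n:ℂ) + (p:ℂ)*(s:ℂ))*τ) ≠ 1 := by rw [← hAeq]; exact hXp
  have key : ∀ m ∈ Finset.range p,
      e2 (u * ((2*(m:ℂ) + 2*(p':ℂ) - (p:ℂ))/(2*(p:ℂ)))) * e2 (v*(n:ℂ)/(p:ℂ)) *
        e2 (τ * ((n:ℂ)*((p':ℂ)*(n:ℂ) + (m:ℂ) + (p':ℂ))/(p:ℂ) - (n:ℂ)/2)) *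
        e2 ((u + (n:ℂ)*τ)/2) * tt p p' n m u v τ (2*(p':ℤ)*s)
      = e2 ((u*(p':ℂ) + v*((n:ℂ) + (p:ℂ)*(s:ℂ)) +
            τ*((p':ℂ)*((n:ℂ) + (p:ℂ)*(s:ℂ))*(((n:ℂ) + (p:ℂ)*(s:ℂ))+1)))/(p:ℂ)
            + (m:ℂ)*((u + ((n:ℂ) + (p:ℂ)*(s:ℂ))*τ)/(p:ℂ)))
          / (1 - e2 (u + ((n:ℂ) + (p:ℂ)*(s:ℂ))*τ)) := by
    intro m _
    unfold tt
    rw [hsign, one_mul, hAeq]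
    rw [← mul_div_assoc]
    congr 1
    simp only [← e2_add]
    congr 1
    unfold V0c Tc
    rw [hkcast]
    linear_combination ((-1)*τ*(s:ℂ)*(p':ℂ) + (-1)*τ*(s:ℂ)^2*(p:ℂ)*(p':ℂ) + (-1)*τ*(m:ℂ)*(s:ℂ)
        + (-2)*τ*(n:ℂ)*(s:ℂ)*(p':ℂ) + (-1)*v*(s:ℂ) + (-1/2)*u) * hP
      + ((1)*τ*(s:ℂ)*(p':ℂ) + (1)*τ*(s:ℂ)^2*(p:ℂ)*(p':ℂ) + (1)*τ*(m:ℂ)*(s:ℂ)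
        + (2)*τ*(n:ℂ)*(s:ℂ)*(p':ℂ) + (1)*v*(s:ℂ)) * hP'
  rw [Finset.sum_congr rfl key]
  have key2 : ∀ m ∈ Finset.range p,
      e2 ((u*(p':ℂ) + v*((n:ℂ) + (p:ℂ)*(s:ℂ)) +
            τ*((p':ℂ)*((n:ℂ) + (p:ℂ)*(s:ℂ))*(((n:ℂ) + (p:ℂ)*(s:ℂ))+1)))/(p:ℂ)
            + (m:ℂ)*((u + ((n:ℂ) + (p:ℂ)*(s:ℂ))*τ)/(p:ℂ)))
          / (1 - e2 (u + ((n:ℂ) + (p:ℂ)*(s:ℂ))*τ))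
      = e2 ((u*(p':ℂ) + v*((n:ℂ) + (p:ℂ)*(s:ℂ)) +
            τ*((p':ℂ)*((n:ℂ) + (p:ℂ)*(s:ℂ))*(((n:ℂ) + (p:ℂ)*(s:ℂ))+1)))/(p:ℂ)) *
          (e2 ((u + ((n:ℂ) + (p:ℂ)*(s:ℂ))*τ)/(p:ℂ)))^m
          / (1 - e2 (u + ((n:ℂ) + (p:ℂ)*(s:ℂ))*τ)) := by
    intro m _
    rw [e2_add, e2_pow]
  rw [Finset.sum_congr rfl key2]
  rw [← Finset.sum_div, ← Finset.mul_sum, geom_sum_eq hQ1]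
  have hQp : (e2 ((u + ((n:ℂ) + (p:ℂ)*(s:ℂ))*τ)/(p:ℂ)))^p = e2 (u + ((n:ℂ) + (p:ℂ)*(s:ℂ))*τ) := by
    rw [e2_pow]
    congr 1
    linear_combination (u + ((n:ℂ) + (p:ℂ)*(s:ℂ))*τ) * hP
  rw [hQp]
  have hRHS : e2 (u*(p':ℂ)/(p:ℂ)) * Gterm p p' u v τ ((n:ℤ) + (p:ℤ)*s)
      = e2 ((u*(p':ℂ) + v*((n:ℂ) + (p:ℂ)*(s:ℂ)) +
            τ*((p':ℂ)*((n:ℂ) + (p:ℂ)*(s:ℂ))*(((n:ℂ) + (p:ℂ)*(s:ℂ))+1)))/(p:ℂ))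
          / (1 - e2 ((u + ((n:ℂ) + (p:ℂ)*(s:ℂ))*τ)/(p:ℂ))) := by
    unfold Gterm
    rw [← mul_div_assoc, hQeq]
    congr 1
    simp only [← e2_add]
    congr 1
    rw [hNcast]
    field_simp
    ring
  rw [hRHS]
  have h1 : e2 ((u + ((n:ℂ) + (p:ℂ)*(s:ℂ))*τ)/(p:ℂ)) - 1 ≠ 0 := sub_ne_zero_of_ne hQ1
  have h2 : (1:ℂ) - e2 (u + ((n:ℂ) + (p:ℂ)*(s:ℂ))*τ) ≠ 0 := sub_ne_zero_of_ne (Ne.symm hA1)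
  have h3 : (1:ℂ) - e2 ((u + ((n:ℂ) + (p:ℂ)*(s:ℂ))*τ)/(p:ℂ)) ≠ 0 := sub_ne_zero_of_ne (Ne.symm hQ1)
  field_simp
  ring


/-- Decomposition of the level-2p' Appell–Lerch sum into level-1 Appell–Lerch sums. -/
theorem appell_lerch_decomposition (p p' : ℕ) (hp : 0 < p) (hp' : 0 < p')
    (u v τ : ℂ) (hτ : 0 < τ.im)
    (hL : ALDefined (u / p) (τ / p))
    (hR : ∀ n : ℕ, n < p → ALDefined (u + n * τ) (((p : ℂ) / (2 * p')) * τ)) :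
    AL (2 * p') (u / p) (v / p) (τ / p) =
      (1 / (2 * (p' : ℂ))) * ∑ n ∈ Finset.range p, ∑ m ∈ Finset.range p,
        e2 (u * ((2 * (m : ℂ) + 2 * p' - p) / (2 * p))) * e2 (v * n / p) *
          e2 (τ * ((n : ℂ) * ((p' : ℂ) * n + m + p') / p - (n : ℂ) / 2)) *
          ∑ l ∈ Finset.range (2 * p'),
            AL 1 (u + n * τ)
              (((2 * (p' : ℂ) * n + m + p') / (2 * p')) * τ - ((p : ℂ) / (4 * p')) * τ +
                (v + l) / (2 * p'))
              (((p : ℂ) / (2 * p')) * τ) := by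
  have hPc : (p:ℂ) ≠ 0 := Nat.cast_ne_zero.2 hp.ne'
  have hP'c : (p':ℂ) ≠ 0 := Nat.cast_ne_zero.2 hp'.ne'
  have hτp : 0 < (τ/(p:ℂ)).im := by
    have h : τ/(p:ℂ) = ((((p:ℝ)⁻¹):ℝ):ℂ)*τ := by
      rw [show ((((p:ℝ)⁻¹):ℝ):ℂ) = ((p:ℂ))⁻¹ by push_cast; ring, div_eq_inv_mul]
    rw [h, Complex.im_ofReal_mul]
    have hpr : (0:ℝ) < (p:ℝ) := by exact_mod_cast hp
    positivity
  have hK1 : (1:ℤ) ≤ 2*(p':ℤ) := by omega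
  have hsign2 : ∀ N : ℤ, (-1:ℂ)^((2*(p':ℤ))*N) = 1 := by
    intro N
    rw [show (2*(p':ℤ))*N = 2*((p':ℤ)*N) by ring, zpow_mul]
    norm_num
  have hcastK : ∀ N : ℤ, ((2*(p':ℤ) : ℤ):ℂ)*(N:ℂ)*((N:ℂ)+1)/2 = 2*(p':ℂ)*(N:ℂ)*((N:ℂ)+1)/2 := by
    intro N; push_cast; ring
  have hG : Summable (Gterm p p' u v τ) := by
    apply (summable_ALterm (2*(p':ℤ)) hK1 (u/(p:ℂ)) (v/(p:ℂ)) (τ/(p:ℂ)) hτp).congr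
    intro N
    rw [hsign2 N, one_mul, hcastK N]
    rfl
  have hLHS : AL (2*(p':ℤ)) (u/(p:ℂ)) (v/(p:ℂ)) (τ/(p:ℂ))
      = e2 (u*(p':ℂ)/(p:ℂ)) * ∑' N : ℤ, Gterm p p' u v τ N := by
    rw [AL]
    congr 1
    · congr 1
      push_cast
      ring
    · apply tsum_congr
      intro N
      rw [hsign2 N, one_mul, hcastK N]
      rfl
  -- summability of tt compositions
  have htt : ∀ n m : ℕ, Summable (tt p p' n m u v τ) := by
    intro n m
    unfold tt
    exact summable_tt_shape p p' n m hp hp' u v τ hτ (V0c p p' n m v τ)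
  have hinj : Function.Injective (fun s : ℤ => 2*(p':ℤ)*s) := by
    intro a b h
    have h2 : (2*(p':ℤ)) ≠ 0 := by omega
    exact mul_left_cancel₀ h2 h
  -- the per-n computation
  have hmain : ∀ n ∈ Finset.range p,
      ∑ m ∈ Finset.range p,
        e2 (u * ((2 * (m : ℂ) + 2 * (p':ℂ) - (p:ℂ)) / (2 * (p:ℂ)))) * e2 (v * (n:ℂ) / (p:ℂ)) *
          e2 (τ * ((n : ℂ) * ((p' : ℂ) * (n:ℂ) + (m:ℂ) + (p':ℂ)) / (p:ℂ) - (n : ℂ) / 2)) *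
          (∑ l ∈ Finset.range (2 * p'),
            AL 1 (u + (n:ℂ) * τ)
              (((2 * (p' : ℂ) * (n:ℂ) + (m:ℂ) + (p':ℂ)) / (2 * (p':ℂ))) * τ
                - ((p : ℂ) / (4 * (p':ℂ))) * τ + (v + (l:ℂ)) / (2 * (p':ℂ)))
              (((p : ℂ) / (2 * (p':ℂ))) * τ))
      = (2*(p':ℂ)) * (e2 (u*(p':ℂ)/(p:ℂ)) * ∑' s : ℤ, Gterm p p' u v τ ((n:ℤ) + (p:ℤ)*s)) := by
    intro n hn
    have hn' : n < p := Finset.mem_range.1 hn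
    calc ∑ m ∈ Finset.range p,
        e2 (u * ((2 * (m : ℂ) + 2 * (p':ℂ) - (p:ℂ)) / (2 * (p:ℂ)))) * e2 (v * (n:ℂ) / (p:ℂ)) *
          e2 (τ * ((n : ℂ) * ((p' : ℂ) * (n:ℂ) + (m:ℂ) + (p':ℂ)) / (p:ℂ) - (n : ℂ) / 2)) *
          (∑ l ∈ Finset.range (2 * p'),
            AL 1 (u + (n:ℂ) * τ)
              (((2 * (p' : ℂ) * (n:ℂ) + (m:ℂ) + (p':ℂ)) / (2 * (p':ℂ))) * τ
                - ((p : ℂ) / (4 * (p':ℂ))) * τ + (v + (l:ℂ)) / (2 * (p':ℂ)))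
              (((p : ℂ) / (2 * (p':ℂ))) * τ))
        = ∑ m ∈ Finset.range p, (2*(p':ℂ)) * ∑' s : ℤ,
            e2 (u * ((2 * (m : ℂ) + 2 * (p':ℂ) - (p:ℂ)) / (2 * (p:ℂ)))) * e2 (v * (n:ℂ) / (p:ℂ)) *
              e2 (τ * ((n : ℂ) * ((p' : ℂ) * (n:ℂ) + (m:ℂ) + (p':ℂ)) / (p:ℂ) - (n : ℂ) / 2)) *
              e2 ((u + (n:ℂ)*τ)/2) * tt p p' n m u v τ (2*(p':ℤ)*s) := by
          apply Finset.sum_congr rfl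
          intro m _
          rw [step1 p p' n m hp hp' u v τ hτ]
          rw [tsum_mul_left]
          ring
      _ = (2*(p':ℂ)) * ∑ m ∈ Finset.range p, ∑' s : ℤ,
            e2 (u * ((2 * (m : ℂ) + 2 * (p':ℂ) - (p:ℂ)) / (2 * (p:ℂ)))) * e2 (v * (n:ℂ) / (p:ℂ)) *
              e2 (τ * ((n : ℂ) * ((p' : ℂ) * (n:ℂ) + (m:ℂ) + (p':ℂ)) / (p:ℂ) - (n : ℂ) / 2)) *
              e2 ((u + (n:ℂ)*τ)/2) * tt p p' n m u v τ (2*(p':ℤ)*s) := by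
          rw [← Finset.mul_sum]
      _ = (2*(p':ℂ)) * ∑' s : ℤ, ∑ m ∈ Finset.range p,
            e2 (u * ((2 * (m : ℂ) + 2 * (p':ℂ) - (p:ℂ)) / (2 * (p:ℂ)))) * e2 (v * (n:ℂ) / (p:ℂ)) *
              e2 (τ * ((n : ℂ) * ((p' : ℂ) * (n:ℂ) + (m:ℂ) + (p':ℂ)) / (p:ℂ) - (n : ℂ) / 2)) *
              e2 ((u + (n:ℂ)*τ)/2) * tt p p' n m u v τ (2*(p':ℤ)*s) := by
          congr 1
          rw [Summable.tsum_finsetSum]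
          intro m _
          exact (((htt n m).comp_injective hinj)).mul_left _
      _ = (2*(p':ℂ)) * ∑' s : ℤ, e2 (u*(p':ℂ)/(p:ℂ)) * Gterm p p' u v τ ((n:ℤ) + (p:ℤ)*s) := by
          congr 1
          apply tsum_congr
          intro s
          exact heart p p' hp hp' u v τ n s (hL ((n:ℤ) + (p:ℤ)*s)) (hR n hn' (2*(p':ℤ)*s))
      _ = (2*(p':ℂ)) * (e2 (u*(p':ℂ)/(p:ℂ)) * ∑' s : ℤ, Gterm p p' u v τ ((n:ℤ) + (p:ℤ)*s)) := by
          rw [tsum_mul_left]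
  calc AL (2*(p':ℤ)) (u/(p:ℂ)) (v/(p:ℂ)) (τ/(p:ℂ))
      = e2 (u*(p':ℂ)/(p:ℂ)) * ∑' N : ℤ, Gterm p p' u v τ N := hLHS
    _ = e2 (u*(p':ℂ)/(p:ℂ)) * ∑ n ∈ Finset.range p, ∑' s : ℤ,
          Gterm p p' u v τ ((n:ℤ) + (p:ℤ)*s) := by
        rw [tsum_fiber p hp _ hG]
    _ = ∑ n ∈ Finset.range p, e2 (u*(p':ℂ)/(p:ℂ)) * ∑' s : ℤ,
          Gterm p p' u v τ ((n:ℤ) + (p:ℤ)*s) := by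
        rw [Finset.mul_sum]
    _ = (1 / (2 * (p' : ℂ))) * ∑ n ∈ Finset.range p, (2*(p':ℂ)) *
          (e2 (u*(p':ℂ)/(p:ℂ)) * ∑' s : ℤ, Gterm p p' u v τ ((n:ℤ) + (p:ℤ)*s)) := by
        rw [Finset.mul_sum]
        apply Finset.sum_congr rfl
        intro n _
        field_simp
    _ = _ := by
        congr 1
        apply Finset.sum_congr rfl
        intro n hn
        rw [← hmain n hn]

end
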